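/- Let a ≥ 0 and set q₁ = Φ(a), q₂ = Φ(a√2), q₃ = Φ(a√3). Then 7q₁ − 3q₂ − 3q₃ ≥ 0.1217; in particular 7q₁ − 3q₂ − 3q₃ > 0 for all a ≥ 0. -/

import Mathlib

open MeasureTheory ProbabilityTheory Real

/-- The standard normal cumulative distribution function
`Φ(x) = (1/√(2π)) ∫_{-∞}^{x} e^{-t²/2} dt`. -/
noncomputable def stdGaussianCDF (x : ℝ) : ℝ :=
  (Real.sqrt (2 * Real.pi))⁻¹ * ∫ t in Set.Iic x, Real.exp (-t ^ 2 / 2)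

namespace Stmt12Aux

open Set Finset

lemma gauss_int : Integrable (fun t : ℝ => Real.exp (-t ^ 2 / 2)) := by
  have h := integrable_exp_neg_mul_sq (by norm_num : (0:ℝ) < 1/2)
  convert h using 2 with x
  ring_nf

lemma gauss_Iic0 : (∫ t in Iic (0:ℝ), Real.exp (-t ^ 2 / 2)) = Real.sqrt (2 * π) / 2 := by
  have hint := gauss_int
  have heven : (∫ t in Iic (0:ℝ), Real.exp (-t ^ 2 / 2))
      = ∫ t in Ioi (0:ℝ), Real.exp (-t ^ 2 / 2) := by
    have h := integral_comp_neg_Iic (0:ℝ) (fun t => Real.exp (-t ^ 2 / 2))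
    simp only [neg_sq, neg_zero] at h
    simpa using h
  have htot : (∫ t in Iic (0:ℝ), Real.exp (-t ^ 2 / 2))
      + (∫ t in Ioi (0:ℝ), Real.exp (-t ^ 2 / 2)) = Real.sqrt (2 * π) := by
    rw [intervalIntegral.integral_Iic_add_Ioi hint.integrableOn hint.integrableOn]
    have h2 : (∫ t : ℝ, Real.exp (-t ^ 2 / 2)) = ∫ t : ℝ, Real.exp (-(1/2) * t ^ 2) := by
      congr 1; funext t; ring_nf
    rw [h2, integral_gaussian]
    congr 1; ring
  linarith [heven, htot]

lemma cdf_eq (x : ℝ) :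
    stdGaussianCDF x
      = 1/2 + (Real.sqrt (2 * π))⁻¹ * ∫ t in (0:ℝ)..x, Real.exp (-t ^ 2 / 2) := by
  have h := intervalIntegral.integral_Iic_sub_Iic (μ := volume)
    (f := fun t : ℝ => Real.exp (-t ^ 2 / 2)) (a := 0) (b := x)
    gauss_int.integrableOn gauss_int.integrableOn
  rw [gauss_Iic0] at h
  have hs : Real.sqrt (2 * π) ≠ 0 := by positivity
  unfold stdGaussianCDF
  rw [show (∫ t in Iic x, Real.exp (-t ^ 2 / 2))
      = Real.sqrt (2 * π) / 2 + ∫ t in (0:ℝ)..x, Real.exp (-t ^ 2 / 2) by linarith]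
  rw [mul_add]
  have hhalf : (Real.sqrt (2 * π))⁻¹ * (Real.sqrt (2 * π) / 2) = 1/2 := by
    field_simp
  rw [hhalf]

lemma exp_taylor8 {y : ℝ} (h0 : 0 ≤ y) (h1 : y ≤ 1) :
    |Real.exp (-y) - (1 - y + y^2/2 - y^3/6 + y^4/24 - y^5/120 + y^6/720 - y^7/5040)|
      ≤ y^8 / 35840 := by
  have hb := Real.exp_bound (x := -y) (by rwa [abs_neg, abs_of_nonneg h0]) (n := 8)
    (by norm_num)
  have hs : (∑ m ∈ range 8, (-y) ^ m / m.factorial)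
      = 1 - y + y^2/2 - y^3/6 + y^4/24 - y^5/120 + y^6/720 - y^7/5040 := by
    simp [Finset.sum_range_succ, Nat.factorial]
    ring
  rw [hs, abs_neg, abs_of_nonneg h0] at hb
  calc |Real.exp (-y) - _| ≤ y ^ 8 * ((8:ℕ).succ / ((8:ℕ).factorial * 8)) := hb
    _ = y^8/35840 := by norm_num [Nat.factorial]; ring

lemma exp_taylor6 {y : ℝ} (h0 : 0 ≤ y) (h1 : y ≤ 1) :
    |Real.exp (-y) - (1 - y + y^2/2 - y^3/6 + y^4/24 - y^5/120)| ≤ y^6 * (7/4320) := by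
  have hb := Real.exp_bound (x := -y) (by rwa [abs_neg, abs_of_nonneg h0]) (n := 6)
    (by norm_num)
  have hs : (∑ m ∈ range 6, (-y) ^ m / m.factorial)
      = 1 - y + y^2/2 - y^3/6 + y^4/24 - y^5/120 := by
    simp [Finset.sum_range_succ, Nat.factorial]
    ring
  rw [hs, abs_neg, abs_of_nonneg h0] at hb
  calc |Real.exp (-y) - _| ≤ y ^ 6 * ((6:ℕ).succ / ((6:ℕ).factorial * 6)) := hb
    _ = y^6 * (7/4320) := by norm_num [Nat.factorial]

lemma J_eval (c s : ℝ) :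
    (∫ t in (0:ℝ)..(5/8), (1 - c*t^2 + c^2*t^4/2 - c^3*t^6/6 + c^4*t^8/24 - c^5*t^10/120
        + c^6*t^12/720 - c^7*t^14/5040 + s*(c^8*t^16/35840)))
      = 5/8 - c/3*(5/8:ℝ)^3 + c^2/10*(5/8:ℝ)^5 - c^3/42*(5/8:ℝ)^7 + c^4/216*(5/8:ℝ)^9
        - c^5/1320*(5/8:ℝ)^11 + c^6/9360*(5/8:ℝ)^13 - c^7/75600*(5/8:ℝ)^15
        + s*(c^8/609280*(5/8:ℝ)^17) := by
  have hd : ∀ t : ℝ, HasDerivAt (fun t : ℝ => t - c/3*t^3 + c^2/10*t^5 - c^3/42*t^7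
      + c^4/216*t^9 - c^5/1320*t^11 + c^6/9360*t^13 - c^7/75600*t^15 + s*(c^8/609280*t^17))
      (1 - c*t^2 + c^2*t^4/2 - c^3*t^6/6 + c^4*t^8/24 - c^5*t^10/120
        + c^6*t^12/720 - c^7*t^14/5040 + s*(c^8*t^16/35840)) t := by
    intro t
    have H := (((((((((hasDerivAt_id t).sub ((hasDerivAt_pow 3 t).const_mul (c/3))).add
      ((hasDerivAt_pow 5 t).const_mul (c^2/10))).sub
      ((hasDerivAt_pow 7 t).const_mul (c^3/42))).add
      ((hasDerivAt_pow 9 t).const_mul (c^4/216))).sub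
      ((hasDerivAt_pow 11 t).const_mul (c^5/1320))).add
      ((hasDerivAt_pow 13 t).const_mul (c^6/9360))).sub
      ((hasDerivAt_pow 15 t).const_mul (c^7/75600))).add
      ((hasDerivAt_pow 17 t).const_mul (s*(c^8/609280))))
    convert H using 1
    · rfl
    · rfl
    · funext x; simp only [Pi.add_apply, Pi.sub_apply, id_eq]; ring
    · push_cast; ring
  rw [intervalIntegral.integral_eq_sub_of_hasDerivAt (fun t _ => hd t)
    ((Continuous.intervalIntegrable (by fun_prop) _ _))]
  norm_num

lemma J_ge (c : ℝ) (hc : 0 ≤ c) (hc2 : c ≤ 2) :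
    5/8 - c/3*(5/8:ℝ)^3 + c^2/10*(5/8:ℝ)^5 - c^3/42*(5/8:ℝ)^7 + c^4/216*(5/8:ℝ)^9
        - c^5/1320*(5/8:ℝ)^11 + c^6/9360*(5/8:ℝ)^13 - c^7/75600*(5/8:ℝ)^15
        - c^8/609280*(5/8:ℝ)^17
      ≤ ∫ t in (0:ℝ)..(5/8), Real.exp (-(c*t^2)) := by
  have hpt : ∀ t ∈ Icc (0:ℝ) (5/8), (1 - c*t^2 + c^2*t^4/2 - c^3*t^6/6 + c^4*t^8/24
      - c^5*t^10/120 + c^6*t^12/720 - c^7*t^14/5040 + (-1)*(c^8*t^16/35840))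
      ≤ Real.exp (-(c*t^2)) := by
    intro t ht
    have hy0 : 0 ≤ c*t^2 := by positivity
    have hy1 : c*t^2 ≤ 1 := by nlinarith [ht.1, ht.2, sq_nonneg t]
    have h2 := (abs_le.mp (exp_taylor8 hy0 hy1)).1
    nlinarith [h2]
  have hmono := intervalIntegral.integral_mono_on (μ := volume) (by norm_num : (0:ℝ) ≤ 5/8)
    (Continuous.intervalIntegrable (by fun_prop) _ _)
    (Continuous.intervalIntegrable (by fun_prop) _ _) hpt
  rw [J_eval c (-1)] at hmono
  linarith [hmono]

lemma J_le (c : ℝ) (hc : 0 ≤ c) (hc2 : c ≤ 2) :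
    (∫ t in (0:ℝ)..(5/8), Real.exp (-(c*t^2)))
      ≤ 5/8 - c/3*(5/8:ℝ)^3 + c^2/10*(5/8:ℝ)^5 - c^3/42*(5/8:ℝ)^7 + c^4/216*(5/8:ℝ)^9
        - c^5/1320*(5/8:ℝ)^11 + c^6/9360*(5/8:ℝ)^13 - c^7/75600*(5/8:ℝ)^15
        + c^8/609280*(5/8:ℝ)^17 := by
  have hpt : ∀ t ∈ Icc (0:ℝ) (5/8), Real.exp (-(c*t^2))
      ≤ (1 - c*t^2 + c^2*t^4/2 - c^3*t^6/6 + c^4*t^8/24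
      - c^5*t^10/120 + c^6*t^12/720 - c^7*t^14/5040 + (1:ℝ)*(c^8*t^16/35840)) := by
    intro t ht
    have hy0 : 0 ≤ c*t^2 := by positivity
    have hy1 : c*t^2 ≤ 1 := by nlinarith [ht.1, ht.2, sq_nonneg t]
    have h2 := (abs_le.mp (exp_taylor8 hy0 hy1)).2
    nlinarith [h2]
  have hmono := intervalIntegral.integral_mono_on (μ := volume) (by norm_num : (0:ℝ) ≤ 5/8)
    (Continuous.intervalIntegrable (by fun_prop) _ _)
    (Continuous.intervalIntegrable (by fun_prop) _ _) hpt
  rw [J_eval c 1] at hmono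
  linarith [hmono]

lemma JA : (0.5865872:ℝ) ≤ ∫ t in (0:ℝ)..(5/8), Real.exp (-(1/2*t^2)) := by
  refine le_trans ?_ (J_ge (1/2) (by norm_num) (by norm_num))
  norm_num

lemma JB : (∫ t in (0:ℝ)..(5/8), Real.exp (-(1*t^2))) ≤ 0.5523329 := by
  refine le_trans (J_le 1 (by norm_num) (by norm_num)) ?_
  norm_num

lemma JC : (∫ t in (0:ℝ)..(5/8), Real.exp (-(3/2*t^2))) ≤ 0.5217048 := by
  refine le_trans (J_le (3/2) (by norm_num) (by norm_num)) ?_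
  norm_num

lemma s2u : Real.sqrt 2 ≤ 1.41421357 := by
  nlinarith [Real.sq_sqrt (show (0:ℝ) ≤ 2 by norm_num), Real.sqrt_nonneg 2]
lemma s2l : (1.41421356:ℝ) ≤ Real.sqrt 2 := by
  nlinarith [Real.sq_sqrt (show (0:ℝ) ≤ 2 by norm_num), Real.sqrt_nonneg 2]
lemma s3u : Real.sqrt 3 ≤ 1.73205081 := by
  nlinarith [Real.sq_sqrt (show (0:ℝ) ≤ 3 by norm_num), Real.sqrt_nonneg 3]
lemma s3l : (1.7320508:ℝ) ≤ Real.sqrt 3 := by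
  nlinarith [Real.sq_sqrt (show (0:ℝ) ≤ 3 by norm_num), Real.sqrt_nonneg 3]

lemma eu0l : (0.82257:ℝ) ≤ Real.exp (-(25/128:ℝ)) := by
  have h := (abs_le.mp (exp_taylor6 (y := 25/128) (by norm_num) (by norm_num))).1
  norm_num at h
  linarith

lemma eu0u : Real.exp (-(25/128:ℝ)) ≤ 0.82258 := by
  have h := (abs_le.mp (exp_taylor6 (y := 25/128) (by norm_num) (by norm_num))).2
  norm_num at h
  linarith

lemma eu1l : (0.82:ℝ) ≤ Real.exp (-(3969/20000:ℝ)) := by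
  have h := (abs_le.mp (exp_taylor6 (y := 3969/20000) (by norm_num) (by norm_num))).1
  norm_num at h
  linarith

lemma eu1u : Real.exp (-(3969/20000:ℝ)) ≤ 0.82001 := by
  have h := (abs_le.mp (exp_taylor6 (y := 3969/20000) (by norm_num) (by norm_num))).2
  norm_num at h
  linarith

noncomputable def gg (t : ℝ) : ℝ :=
  7 * Real.exp (-(1/2*t^2)) - 3*Real.sqrt 2 * Real.exp (-(1*t^2))
    - 3*Real.sqrt 3 * Real.exp (-(3/2*t^2))

lemma gg_cont : Continuous gg := by unfold gg; fun_prop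

lemma exp_sq (t : ℝ) : Real.exp (-(1*t^2)) = (Real.exp (-(1/2*t^2)))^2 := by
  rw [← Real.exp_nat_mul]; congr 1; push_cast; ring

lemma exp_cube (t : ℝ) : Real.exp (-(3/2*t^2)) = (Real.exp (-(1/2*t^2)))^3 := by
  rw [← Real.exp_nat_mul]; congr 1; push_cast; ring

lemma gg_nonpos {t : ℝ} (ht : t ∈ Icc (0:ℝ) (5/8)) : gg t ≤ 0 := by
  have hu1 : (0.82257:ℝ) ≤ Real.exp (-(1/2*t^2)) := by
    refine le_trans eu0l (Real.exp_le_exp.mpr ?_)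
    nlinarith [ht.1, ht.2]
  have hu2 : Real.exp (-(1/2*t^2)) ≤ 1 := by
    rw [Real.exp_le_one_iff]; nlinarith [sq_nonneg t]
  set u := Real.exp (-(1/2*t^2)) with hu
  unfold gg
  rw [exp_sq, exp_cube, ← hu]
  have hu0 : (0:ℝ) ≤ u := by positivity
  have e2 : 3*(1.41421356:ℝ)*u^2 ≤ 3*Real.sqrt 2*u^2 := by
    nlinarith [mul_le_mul_of_nonneg_right s2l (sq_nonneg u)]
  have e3 : 3*(1.7320508:ℝ)*u^3 ≤ 3*Real.sqrt 3*u^3 := by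
    have h3 : (0:ℝ) ≤ u^3 := by positivity
    nlinarith [mul_le_mul_of_nonneg_right s3l h3]
  have hpoly : 7*u - 3*(1.41421356:ℝ)*u^2 - 3*(1.7320508:ℝ)*u^3 ≤ 0 := by
    nlinarith [mul_nonneg (sub_nonneg.2 hu1) hu0,
      mul_nonneg (mul_nonneg (sub_nonneg.2 hu1) hu0) hu0,
      mul_nonneg (sub_nonneg.2 hu1) (sub_nonneg.2 hu1)]
  linarith

lemma gg_mid {t : ℝ} (ht : t ∈ Icc (5/8:ℝ) (63/100)) : -0.008 ≤ gg t := by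
  have hu1 : (0.82:ℝ) ≤ Real.exp (-(1/2*t^2)) := by
    refine le_trans eu1l (Real.exp_le_exp.mpr ?_)
    nlinarith [ht.1, ht.2]
  have hu2 : Real.exp (-(1/2*t^2)) ≤ 0.82258 := by
    refine le_trans (Real.exp_le_exp.mpr ?_) eu0u
    nlinarith [ht.1, ht.2]
  set u := Real.exp (-(1/2*t^2)) with hu
  unfold gg
  rw [exp_sq, exp_cube, ← hu]
  have hu0 : (0:ℝ) ≤ u := by positivity
  have e2 : 3*Real.sqrt 2*u^2 ≤ 3*(1.41421357:ℝ)*u^2 := by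
    nlinarith [mul_le_mul_of_nonneg_right s2u (sq_nonneg u)]
  have e3 : 3*Real.sqrt 3*u^3 ≤ 3*(1.73205081:ℝ)*u^3 := by
    have h3 : (0:ℝ) ≤ u^3 := by positivity
    nlinarith [mul_le_mul_of_nonneg_right s3u h3]
  have hpoly : -0.008 ≤ 7*u - 3*(1.41421357:ℝ)*u^2 - 3*(1.73205081:ℝ)*u^3 := by
    nlinarith [mul_nonneg (sub_nonneg.2 hu1) (sub_nonneg.2 hu2),
      mul_nonneg (mul_nonneg (sub_nonneg.2 hu1) (sub_nonneg.2 hu2)) hu0,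
      mul_nonneg (sub_nonneg.2 hu1) (sub_nonneg.2 hu1),
      mul_nonneg (sub_nonneg.2 hu2) (sub_nonneg.2 hu2)]
  linarith

lemma gg_nonneg {t : ℝ} (ht : (63/100:ℝ) ≤ t) (ht0 : 0 ≤ t) : 0 ≤ gg t := by
  have hu2 : Real.exp (-(1/2*t^2)) ≤ 0.82001 := by
    refine le_trans (Real.exp_le_exp.mpr ?_) eu1u
    nlinarith [ht, ht0]
  set u := Real.exp (-(1/2*t^2)) with hu
  unfold gg
  rw [exp_sq, exp_cube, ← hu]
  have hu0 : (0:ℝ) ≤ u := by positivity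
  have e2 : 3*Real.sqrt 2*u^2 ≤ 3*(1.41421357:ℝ)*u^2 := by
    nlinarith [mul_le_mul_of_nonneg_right s2u (sq_nonneg u)]
  have e3 : 3*Real.sqrt 3*u^3 ≤ 3*(1.73205081:ℝ)*u^3 := by
    have h3 : (0:ℝ) ≤ u^3 := by positivity
    nlinarith [mul_le_mul_of_nonneg_right s3u h3]
  have hpoly : 0 ≤ 7*u - 3*(1.41421357:ℝ)*u^2 - 3*(1.73205081:ℝ)*u^3 := by
    nlinarith [mul_nonneg (mul_nonneg hu0 hu0) (sub_nonneg.2 hu2),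
      mul_nonneg hu0 (sub_nonneg.2 hu2)]
  linarith

lemma gg_lin (b : ℝ) :
    (∫ t in (0:ℝ)..b, gg t)
      = 7 * (∫ t in (0:ℝ)..b, Real.exp (-(1/2*t^2)))
        - 3*Real.sqrt 2 * (∫ t in (0:ℝ)..b, Real.exp (-(1*t^2)))
        - 3*Real.sqrt 3 * (∫ t in (0:ℝ)..b, Real.exp (-(3/2*t^2))) := by
  have i1 : IntervalIntegrable (fun t : ℝ => 7 * Real.exp (-(1/2*t^2))) volume 0 b :=
    Continuous.intervalIntegrable (by fun_prop) _ _
  have i2 : IntervalIntegrable (fun t : ℝ => 3*Real.sqrt 2 * Real.exp (-(1*t^2))) volume 0 b :=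
    Continuous.intervalIntegrable (by fun_prop) _ _
  have i3 : IntervalIntegrable (fun t : ℝ => 3*Real.sqrt 3 * Real.exp (-(3/2*t^2))) volume 0 b :=
    Continuous.intervalIntegrable (by fun_prop) _ _
  unfold gg
  rw [intervalIntegral.integral_sub (i1.sub i2) i3, intervalIntegral.integral_sub i1 i2,
    intervalIntegral.integral_const_mul, intervalIntegral.integral_const_mul,
    intervalIntegral.integral_const_mul]

lemma F0_lb : (-0.9482:ℝ) ≤ ∫ t in (0:ℝ)..(5/8), gg t := by
  rw [gg_lin]
  have hB0 : (0:ℝ) ≤ ∫ t in (0:ℝ)..(5/8), Real.exp (-(1*t^2)) :=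
    intervalIntegral.integral_nonneg (by norm_num) (fun u _ => (Real.exp_pos _).le)
  have hC0 : (0:ℝ) ≤ ∫ t in (0:ℝ)..(5/8), Real.exp (-(3/2*t^2)) :=
    intervalIntegral.integral_nonneg (by norm_num) (fun u _ => (Real.exp_pos _).le)
  have hb : Real.sqrt 2 * (∫ t in (0:ℝ)..(5/8), Real.exp (-(1*t^2)))
      ≤ 1.41421357*0.5523329 := mul_le_mul s2u JB hB0 (by norm_num)
  have hc : Real.sqrt 3 * (∫ t in (0:ℝ)..(5/8), Real.exp (-(3/2*t^2)))
      ≤ 1.73205081*0.5217048 := mul_le_mul s3u JC hC0 (by norm_num)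
  nlinarith [JA, hb, hc]

lemma int_lb {a : ℝ} (ha : 0 ≤ a) : (-0.94824:ℝ) ≤ ∫ t in (0:ℝ)..a, gg t := by
  have hgi : ∀ u v : ℝ, IntervalIntegrable gg volume u v :=
    fun u v => gg_cont.intervalIntegrable u v
  rcases le_total a (5/8:ℝ) with hc1 | hc1
  · have hsplit := intervalIntegral.integral_add_adjacent_intervals (hgi 0 a) (hgi a (5/8))
    have hnp : (∫ t in a..(5/8:ℝ), gg t) ≤ 0 := by
      have h := intervalIntegral.integral_nonneg (f := fun t => -gg t) (μ := volume) hc1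
        (fun u hu => by
          have h2 := gg_nonpos (t := u) ⟨le_trans ha hu.1, hu.2⟩
          show (0:ℝ) ≤ -gg u
          linarith)
      rw [intervalIntegral.integral_neg] at h
      linarith
    linarith [F0_lb]
  · have hsplit := intervalIntegral.integral_add_adjacent_intervals (hgi 0 (5/8)) (hgi (5/8) a)
    rcases le_total a (63/100:ℝ) with hc2 | hc2
    · have hmono := intervalIntegral.integral_mono_on (μ := volume) hc1
        (intervalIntegrable_const (c := (-0.008:ℝ))) (hgi _ _)
        (fun u hu => gg_mid ⟨hu.1, le_trans hu.2 hc2⟩)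
      rw [intervalIntegral.integral_const, smul_eq_mul] at hmono
      have : (-0.00004:ℝ) ≤ (a - 5/8) * (-0.008) := by nlinarith
      linarith [F0_lb]
    · have hsplit2 := intervalIntegral.integral_add_adjacent_intervals
        (hgi (5/8) (63/100)) (hgi (63/100) a)
      have hmono := intervalIntegral.integral_mono_on (μ := volume)
        (by norm_num : (5/8:ℝ) ≤ 63/100)
        (intervalIntegrable_const (c := (-0.008:ℝ))) (hgi _ _)
        (fun u hu => gg_mid hu)
      rw [intervalIntegral.integral_const, smul_eq_mul] at hmono
      have htail : (0:ℝ) ≤ ∫ t in (63/100:ℝ)..a, gg t :=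
        intervalIntegral.integral_nonneg hc2
          (fun u hu => gg_nonneg hu.1 (by linarith [hu.1]))
      have : ((63/100:ℝ) - 5/8) * (-0.008) = -0.00004 := by norm_num
      linarith [F0_lb]

lemma key (a : ℝ) :
    7 * stdGaussianCDF a - 3 * stdGaussianCDF (a * Real.sqrt 2)
        - 3 * stdGaussianCDF (a * Real.sqrt 3)
      = 1/2 + (Real.sqrt (2*π))⁻¹ * ∫ t in (0:ℝ)..a, gg t := by
  have hsub : ∀ (c : ℝ), 0 < c → (∀ x : ℝ, Real.exp (-(x*Real.sqrt c)^2/2)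
        = Real.exp (-(c/2*x^2))) →
      (∫ t in (0:ℝ)..(a * Real.sqrt c), Real.exp (-t^2/2))
        = Real.sqrt c * ∫ x in (0:ℝ)..a, Real.exp (-(c/2*x^2)) := by
    intro c hc hx
    have hcne : Real.sqrt c ≠ 0 := by positivity
    have hcm := intervalIntegral.integral_comp_mul_right (a := 0) (b := a)
      (fun t => Real.exp (-t^2/2)) hcne
    simp only [zero_mul, smul_eq_mul] at hcm
    have hco : (∫ x in (0:ℝ)..a, Real.exp (-(x*Real.sqrt c)^2/2))
        = ∫ x in (0:ℝ)..a, Real.exp (-(c/2*x^2)) :=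
      intervalIntegral.integral_congr (fun x _ => hx x)
    rw [hco] at hcm
    rw [hcm]
    field_simp
  have h2 := hsub 2 (by norm_num) (fun x => by
    congr 1; rw [mul_pow, Real.sq_sqrt (by norm_num : (0:ℝ) ≤ 2)]; ring)
  have h3 := hsub 3 (by norm_num) (fun x => by
    congr 1; rw [mul_pow, Real.sq_sqrt (by norm_num : (0:ℝ) ≤ 3)]; ring)
  have h1 : (∫ t in (0:ℝ)..a, Real.exp (-t^2/2))
      = ∫ t in (0:ℝ)..a, Real.exp (-(1/2*t^2)) :=
    intervalIntegral.integral_congr (fun x _ => by congr 1; ring)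
  rw [cdf_eq a, cdf_eq (a * Real.sqrt 2), cdf_eq (a * Real.sqrt 3), h1, h2, h3, gg_lin]
  have : Real.exp = Real.exp := rfl
  have e22 : (∫ x in (0:ℝ)..a, Real.exp (-(2/2*x^2)))
      = ∫ x in (0:ℝ)..a, Real.exp (-(1*x^2)) :=
    intervalIntegral.integral_congr (fun x _ => by norm_num)
  rw [e22]
  ring

end Stmt12Aux

open Stmt12Aux in
theorem stmt12 (a : ℝ) (ha : 0 ≤ a) :
    0.1217 ≤ 7 * stdGaussianCDF a - 3 * stdGaussianCDF (a * Real.sqrt 2)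
        - 3 * stdGaussianCDF (a * Real.sqrt 3)
      ∧ 0 < 7 * stdGaussianCDF a - 3 * stdGaussianCDF (a * Real.sqrt 2)
        - 3 * stdGaussianCDF (a * Real.sqrt 3) := by
  have hmain : (0.1217:ℝ) ≤ 7 * stdGaussianCDF a - 3 * stdGaussianCDF (a * Real.sqrt 2)
      - 3 * stdGaussianCDF (a * Real.sqrt 3) := by
    rw [key a]
    have hX := int_lb ha
    have hsq : (2.50662:ℝ) ≤ Real.sqrt (2*π) := by
      nlinarith [Real.sq_sqrt (show (0:ℝ) ≤ 2*π by positivity),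
        Real.sqrt_nonneg (2*π), Real.pi_gt_d6]
    have hkpos : (0:ℝ) < (Real.sqrt (2*π))⁻¹ := by positivity
    have hkub : (Real.sqrt (2*π))⁻¹ ≤ (2.50662:ℝ)⁻¹ :=
      inv_anti₀ (by norm_num) hsq
    have hstep : (Real.sqrt (2*π))⁻¹ * (-0.94824)
        ≤ (Real.sqrt (2*π))⁻¹ * ∫ t in (0:ℝ)..a, gg t :=
      mul_le_mul_of_nonneg_left hX hkpos.le
    have hlb : (-0.3783:ℝ) ≤ (Real.sqrt (2*π))⁻¹ * (-0.94824) := by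
      nlinarith [hkpos, hkub]
    linarith
  exact ⟨hmain, lt_of_lt_of_le (by norm_num) hmain⟩
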